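/- arXiv:2012.05284 — 3 statements merged into one kernel-verified Lean document; each statement's English description precedes it below -/
import Mathlib

section
/- Let f be convex and differentiable with L-Lipschitz gradient on ℝ^d, and let X ⊆ ℝ^d be convex. If x₁* and x₂* both minimize f over X, then ∇f(x₁*) = ∇f(x₂*). -/
open Set InnerProductSpace Filter Topology

set_option linter.unusedSectionVars false
set_option linter.unusedVariables false

local notation "⟪" x ", " y "⟫" => @inner ℝ _ _ x y

variable {E : Type*} [NormedAddCommGroup E] [InnerProductSpace ℝ E] [CompleteSpace E]

lemma line_hasDerivAt {f : E → ℝ} {G : E} (x v : E) (t : ℝ)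
    (h : HasGradientAt f G (x + t • v)) :
    HasDerivAt (fun s : ℝ => f (x + s • v)) ⟪G, v⟫ t := by
  have hc : HasDerivAt (fun s : ℝ => x + s • v) v t := by
    simpa using ((hasDerivAt_id t).smul_const v).const_add x
  have h' := hasGradientAt_iff_hasFDerivAt.mp h
  have := h'.comp_hasDerivAt t hc
  simp [toDual_apply_apply] at this
  exact this

lemma line_eq (x y : E) (t : ℝ) : x + t • (y - x) = (1 - t) • x + t • y := by
  rw [smul_sub, sub_smul, one_smul]; abel

lemma deriv_le_of_slope {φ : ℝ → ℝ} {c M : ℝ} (hd : HasDerivAt φ c 0)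
    (hs : ∀ t ∈ Ioc (0:ℝ) 1, φ t - φ 0 ≤ t * M) : c ≤ M := by
  have h1 : Tendsto (slope φ 0) (𝓝[>] 0) (𝓝 c) :=
    (hasDerivAt_iff_tendsto_slope.mp hd).mono_left
      (nhdsWithin_mono _ (fun t ht => ne_of_gt ht))
  refine le_of_tendsto h1 ?_
  filter_upwards [Ioc_mem_nhdsGT_of_mem (Set.mem_Ico.mpr ⟨le_refl 0, zero_lt_one⟩)] with t ht
  rw [slope_def_field, sub_zero, div_le_iff₀ ht.1, mul_comm]
  exact hs t ht

lemma convex_grad_le {f : E → ℝ} (hconv : ConvexOn ℝ univ f) {x G : E}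
    (h : HasGradientAt f G x) (y : E) : ⟪G, y - x⟫ ≤ f y - f x := by
  have hd : HasDerivAt (fun s : ℝ => f (x + s • (y - x))) ⟪G, y - x⟫ 0 := by
    apply line_hasDerivAt; simpa using h
  refine deriv_le_of_slope hd (fun t ht => ?_)
  have hc := hconv.2 (mem_univ x) (mem_univ y) (by linarith [ht.2] : (0:ℝ) ≤ 1 - t)
    (le_of_lt ht.1) (by ring)
  rw [line_eq]
  simp only [zero_smul, add_zero, smul_eq_mul] at *
  nlinarith

lemma opt_grad_nonneg {f : E → ℝ} {X : Set E} (hXconv : Convex ℝ X)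
    {x G : E} (h : HasGradientAt f G x) (hx : x ∈ X)
    (hmin : ∀ y ∈ X, f x ≤ f y) {y : E} (hy : y ∈ X) : 0 ≤ ⟪G, y - x⟫ := by
  have hd : HasDerivAt (fun s : ℝ => f (x + s • (y - x))) ⟪G, y - x⟫ 0 := by
    apply line_hasDerivAt; simpa using h
  have hle := deriv_le_of_slope (M := 0) hd.neg (fun t ht => ?_)
  · linarith
  have hmem : x + t • (y - x) ∈ X := by
    rw [line_eq]
    exact hXconv hx hy (by linarith [ht.2]) (le_of_lt ht.1) (by ring)
  have := hmin _ hmem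
  simp only [zero_smul, add_zero, mul_zero, Pi.neg_apply]
  linarith

lemma descent_lemma {f : E → ℝ} {g : E → E} (hgrad : ∀ x, HasGradientAt f (g x) x)
    {L : ℝ} (hL : 0 < L) (hlip : ∀ x y, ‖g x - g y‖ ≤ L * ‖x - y‖) (x y : E) :
    f y ≤ f x + ⟪g x, y - x⟫ + L / 2 * ‖y - x‖ ^ 2 := by
  set v := y - x with hv
  set ψ : ℝ → ℝ := fun t => f (x + t • v) - t * ⟪g x, v⟫ - L * t ^ 2 * ‖v‖ ^ 2 / 2 with hψ
  have hψ' : ∀ t : ℝ, HasDerivAt ψ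
      (⟪g (x + t • v), v⟫ - ⟪g x, v⟫ - L * t * ‖v‖ ^ 2) t := by
    intro t
    have h1 : HasDerivAt (fun s : ℝ => f (x + s • v)) ⟪g (x + t • v), v⟫ t :=
      line_hasDerivAt x v t (hgrad _)
    have h2 : HasDerivAt (fun s : ℝ => s * ⟪g x, v⟫) ⟪g x, v⟫ t := by
      simpa using (hasDerivAt_id t).mul_const ⟪g x, v⟫
    have h3 : HasDerivAt (fun s : ℝ => L * s ^ 2 * ‖v‖ ^ 2 / 2) (L * t * ‖v‖ ^ 2) t := by
      have := (((hasDerivAt_pow 2 t).const_mul L).mul_const (‖v‖ ^ 2)).div_const 2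
      refine this.congr_deriv ?_; ring
    exact (h1.sub h2).sub h3
  have hanti : AntitoneOn ψ (Icc 0 1) := by
    apply antitoneOn_of_deriv_nonpos (convex_Icc 0 1)
    · exact fun t _ => ((hψ' t).continuousAt).continuousWithinAt
    · exact fun t _ => ((hψ' t).differentiableAt).differentiableWithinAt
    · intro t ht
      rw [interior_Icc] at ht
      rw [(hψ' t).deriv]
      have h4 : ⟪g (x + t • v), v⟫ - ⟪g x, v⟫ = ⟪g (x + t • v) - g x, v⟫ :=
        (inner_sub_left _ _ _).symm
      have h5 : ⟪g (x + t • v) - g x, v⟫ ≤ ‖g (x + t • v) - g x‖ * ‖v‖ :=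
        real_inner_le_norm _ _
      have h6 : ‖g (x + t • v) - g x‖ ≤ L * (t * ‖v‖) := by
        have := hlip (x + t • v) x
        simpa [norm_smul, abs_of_pos ht.1] using this
      nlinarith [norm_nonneg v, norm_nonneg (g (x + t • v) - g x), ht.1.le]
  have hato := hanti (left_mem_Icc.mpr zero_le_one) (right_mem_Icc.mpr zero_le_one) zero_le_one
  simp only [hψ, zero_smul, add_zero, one_smul, zero_mul, mul_zero, zero_pow,
    one_pow, mul_one, sub_zero, ne_eq, OfNat.ofNat_ne_zero, not_false_eq_true] at hato
  rw [hv] at hato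
  have hxy : x + (y - x) = y := by abel
  rw [hxy] at hato
  linarith

lemma cocoercive {f : E → ℝ} {g : E → E} (hgrad : ∀ x, HasGradientAt f (g x) x)
    (hconv : ConvexOn ℝ univ f)
    {L : ℝ} (hL : 0 < L) (hlip : ∀ x y, ‖g x - g y‖ ≤ L * ‖x - y‖) (p z : E) :
    1 / (2 * L) * ‖g z - g p‖ ^ 2 ≤ f z - f p - ⟪g p, z - p⟫ := by
  set Φ : E → ℝ := fun w => f w - ⟪g p, w⟫ with hΦ
  set G : E → E := fun w => g w - g p with hG
  have hΦgrad : ∀ w, HasGradientAt Φ (G w) w := by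
    intro w
    rw [hasGradientAt_iff_hasFDerivAt]
    have h1 := hasGradientAt_iff_hasFDerivAt.mp (hgrad w)
    have h2 := (toDual ℝ E (g p)).hasFDerivAt (x := w)
    have hmap : toDual ℝ E (G w) = toDual ℝ E (g w) - toDual ℝ E (g p) := map_sub _ _ _
    rw [hmap]
    exact h1.sub h2
  have hΦlip : ∀ a b, ‖G a - G b‖ ≤ L * ‖a - b‖ := by
    intro a b; simpa [hG, sub_sub_sub_cancel_right] using hlip a b
  have hmin : ∀ w, Φ p ≤ Φ w := by
    intro w
    have h2 := convex_grad_le hconv (hgrad p) w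
    rw [inner_sub_right] at h2
    simp only [hΦ]
    linarith
  set y := z - (1 / L) • G z with hy
  have hd := descent_lemma hΦgrad hL hΦlip z y
  have hyz : y - z = -((1 / L) • G z) := by rw [hy]; abel
  have hinner : ⟪G z, y - z⟫ = -(1 / L) * ‖G z‖ ^ 2 := by
    rw [hyz, inner_neg_right, real_inner_smul_right, real_inner_self_eq_norm_sq]
    ring
  have hnorm : ‖y - z‖ ^ 2 = (1 / L) ^ 2 * ‖G z‖ ^ 2 := by
    rw [hyz, norm_neg, norm_smul, mul_pow, Real.norm_eq_abs, abs_of_pos (by positivity : (0:ℝ) < 1 / L)]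
  have hPy := hmin y
  rw [hinner, hnorm] at hd
  have heq : Φ z + -(1 / L) * ‖G z‖ ^ 2 + L / 2 * ((1 / L) ^ 2 * ‖G z‖ ^ 2)
      = Φ z - 1 / (2 * L) * ‖G z‖ ^ 2 := by
    field_simp; ring
  rw [heq] at hd
  have key := le_trans hPy hd
  simp only [hΦ, hG] at key ⊢
  rw [inner_sub_right]
  linarith

/-- If `x₁*` and `x₂*` both minimize a convex `L`-smooth `f` over a convex set `X`,
then `∇f(x₁*) = ∇f(x₂*)`. -/
theorem gradient_unique_at_minimizers
    {d : ℕ} (f : EuclideanSpace ℝ (Fin d) → ℝ)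
    (g : EuclideanSpace ℝ (Fin d) → EuclideanSpace ℝ (Fin d))
    (hgrad : ∀ x, HasGradientAt f (g x) x)
    (hconv : ConvexOn ℝ Set.univ f)
    (L : ℝ) (hL : 0 < L)
    (hlip : ∀ x y, ‖g x - g y‖ ≤ L * ‖x - y‖)
    (X : Set (EuclideanSpace ℝ (Fin d))) (hXconv : Convex ℝ X)
    (x1 x2 : EuclideanSpace ℝ (Fin d)) (hx1 : x1 ∈ X) (hx2 : x2 ∈ X)
    (hmin1 : ∀ y ∈ X, f x1 ≤ f y) (hmin2 : ∀ y ∈ X, f x2 ≤ f y) :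
    g x1 = g x2 := by
  have hco := cocoercive hgrad hconv hL hlip x1 x2
  have hopt := opt_grad_nonneg hXconv (hgrad x1) hx1 hmin1 hx2
  have hf12 : f x2 ≤ f x1 := hmin2 _ hx1
  have hf21 : f x1 ≤ f x2 := hmin1 _ hx2
  have hsq : ‖g x2 - g x1‖ ^ 2 ≤ 0 := by
    have hpos : (0:ℝ) < 1 / (2 * L) := by positivity
    nlinarith
  have : g x2 - g x1 = 0 := by
    have := sq_nonneg ‖g x2 - g x1‖
    have hn : ‖g x2 - g x1‖ ^ 2 = 0 := le_antisymm hsq this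
    have := pow_eq_zero_iff (n := 2) (by norm_num) |>.mp hn
    exact norm_eq_zero.mp this
  have := sub_eq_zero.mp this
  exact this.symm
end

section
/- Let C₁ > 0, G* ≥ 0, δ_τ = 2/(τ+3), and suppose ‖a_{τ+1} − g*‖₂ ≤ C₁/√(τ+3) for all τ ≥ 0, where ‖g*‖₂ = G*. Then the weighted average g_{k+1} = Σ_{τ=0}^{k} (2(τ+2)/((k+2)(k+3))) a_{τ+1} satisfies ‖g_{k+1} − g*‖₂ ≤ 4C₁/(3(√(k+3)−1)) + 2G*/((k+2)(k+3)). -/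
lemma sum_lin (k : ℕ) : ∑ τ ∈ Finset.range (k+1), ((τ:ℝ)+2) = ((k:ℝ)+1)*((k:ℝ)+4)/2 := by
  induction k with
  | zero => simp; norm_num
  | succ n ih =>
    rw [Finset.sum_range_succ, ih]
    push_cast
    ring

lemma sum_sqrt_bound (k : ℕ) :
    ∑ τ ∈ Finset.range (k+1), Real.sqrt ((τ:ℝ)+3) ≤
      (2/3) * (Real.sqrt ((k:ℝ)+3) * ((k:ℝ)+3) + ((k:ℝ)+3)) := by
  induction k with
  | zero =>
    norm_num [Finset.sum_range_one]
    nlinarith [Real.sq_sqrt (by norm_num : (3:ℝ) ≥ 0), Real.sqrt_nonneg 3,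
      Real.one_le_sqrt.mpr (by norm_num : (1:ℝ) ≤ 3)]
  | succ n ih =>
    rw [Finset.sum_range_succ]
    push_cast
    set x := Real.sqrt ((n:ℝ)+1+3) with hxd
    set y := Real.sqrt ((n:ℝ)+3) with hyd
    have hx2 : x^2 = (n:ℝ)+4 := by
      rw [hxd]; rw [Real.sq_sqrt (by positivity)]; ring
    have hy2 : y^2 = (n:ℝ)+3 := Real.sq_sqrt (by positivity)
    have hy1 : 1 ≤ y := Real.one_le_sqrt.mpr (by push_cast; linarith)
    have hxy : y ≤ x := Real.sqrt_le_sqrt (by linarith)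
    have key : (2/3) * (y * ((n:ℝ)+3) + ((n:ℝ)+3)) + x ≤
        (2/3) * (x * ((n:ℝ)+1+3) + ((n:ℝ)+1+3)) := by
      have h1 : (x - y) * (x + y) = 1 := by nlinarith
      nlinarith [mul_pos (by linarith : (0:ℝ) < x - y + 1) (by linarith : (0:ℝ) < x + y)]
    calc _ ≤ (2/3) * (y * ((n:ℝ)+3) + ((n:ℝ)+3)) + x := by linarith
      _ ≤ _ := key

/-- If `‖a_{τ+1} − g*‖₂ ≤ C₁/√(τ+3)` for all `τ`, then the weighted average
`g_{k+1} = Σ_{τ=0}^k (2(τ+2)/((k+2)(k+3))) a_{τ+1}` satisfies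
`‖g_{k+1} − g*‖₂ ≤ 4C₁/(3(√(k+3)−1)) + 2G*/((k+2)(k+3))`. -/
theorem weighted_average_error_bound
    {d : ℕ} (a : ℕ → EuclideanSpace ℝ (Fin d))
    (gstar : EuclideanSpace ℝ (Fin d)) (Gstar : ℝ) (hG : ‖gstar‖ = Gstar)
    (hGnn : 0 ≤ Gstar)
    (C₁ : ℝ) (hC₁ : 0 < C₁)
    (ha : ∀ τ : ℕ, ‖a (τ+1) - gstar‖ ≤ C₁ / Real.sqrt ((τ : ℝ) + 3)) :
    ∀ k : ℕ,
      ‖(∑ τ ∈ Finset.range (k+1),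
          (2 * ((τ : ℝ) + 2) / (((k : ℝ) + 2) * ((k : ℝ) + 3))) • a (τ+1)) - gstar‖ ≤
        4 * C₁ / (3 * (Real.sqrt ((k : ℝ) + 3) - 1)) +
          2 * Gstar / (((k : ℝ) + 2) * ((k : ℝ) + 3)) := by
  intro k
  set K : ℝ := ((k:ℝ)+2) * ((k:ℝ)+3) with hKdef
  have hKpos : 0 < K := by positivity
  set s : ℝ := Real.sqrt ((k:ℝ)+3) with hsdef
  have hs2 : s^2 = (k:ℝ)+3 := Real.sq_sqrt (by positivity)
  have hs1 : 1 < s := by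
    rw [hsdef]
    have : (1:ℝ) = Real.sqrt 1 := by simp
    rw [this]
    exact Real.sqrt_lt_sqrt (by norm_num) (by push_cast; linarith)
  -- weight sum
  have hwsum : ∑ τ ∈ Finset.range (k+1), (2 * ((τ:ℝ)+2) / K) = 1 - 2 / K := by
    have : ∑ τ ∈ Finset.range (k+1), (2 * ((τ:ℝ)+2) / K)
        = (∑ τ ∈ Finset.range (k+1), ((τ:ℝ)+2)) * (2 / K) := by
      rw [Finset.sum_mul]; apply Finset.sum_congr rfl; intro τ _; ring
    rw [this, sum_lin]
    field_simp
    ring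
  -- decomposition
  have hdecomp :
      (∑ τ ∈ Finset.range (k+1), (2 * ((τ:ℝ)+2) / K) • a (τ+1)) - gstar
      = (∑ τ ∈ Finset.range (k+1), (2 * ((τ:ℝ)+2) / K) • (a (τ+1) - gstar))
        + (-(2 / K)) • gstar := by
    have h1 : ∑ τ ∈ Finset.range (k+1), (2 * ((τ:ℝ)+2) / K) • (a (τ+1) - gstar)
        = (∑ τ ∈ Finset.range (k+1), (2 * ((τ:ℝ)+2) / K) • a (τ+1))
          - (∑ τ ∈ Finset.range (k+1), (2 * ((τ:ℝ)+2) / K)) • gstar := by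
      rw [Finset.sum_smul]
      rw [← Finset.sum_sub_distrib]
      apply Finset.sum_congr rfl
      intro τ _
      rw [smul_sub]
    rw [h1, hwsum]
    module
  rw [hdecomp]
  have hterm : ∀ τ ∈ Finset.range (k+1),
      ‖(2 * ((τ:ℝ)+2) / K) • (a (τ+1) - gstar)‖ ≤ 2 * C₁ / K * Real.sqrt ((τ:ℝ)+3) := by
    intro τ _
    rw [norm_smul, Real.norm_eq_abs, abs_of_nonneg (by positivity)]
    have hst : (0:ℝ) < Real.sqrt ((τ:ℝ)+3) := Real.sqrt_pos.mpr (by positivity)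
    have h1 : ‖a (τ+1) - gstar‖ ≤ C₁ / Real.sqrt ((τ:ℝ)+3) := ha τ
    have h2 : (2 * ((τ:ℝ)+2) / K) * (C₁ / Real.sqrt ((τ:ℝ)+3))
        ≤ 2 * C₁ / K * Real.sqrt ((τ:ℝ)+3) := by
      have hs2t : Real.sqrt ((τ:ℝ)+3) * Real.sqrt ((τ:ℝ)+3) = (τ:ℝ)+3 :=
        Real.mul_self_sqrt (by positivity)
      rw [div_mul_div_comm, div_le_iff₀ (by positivity : (0:ℝ) < K * Real.sqrt ((τ:ℝ)+3))]
      have heq : 2 * C₁ / K * Real.sqrt ((τ:ℝ)+3) * (K * Real.sqrt ((τ:ℝ)+3))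
          = 2 * C₁ * ((τ:ℝ)+3) := by
        field_simp
        linear_combination hs2t
      rw [heq]
      nlinarith [hC₁.le]
    calc (2 * ((τ:ℝ)+2) / K) * ‖a (τ+1) - gstar‖
        ≤ (2 * ((τ:ℝ)+2) / K) * (C₁ / Real.sqrt ((τ:ℝ)+3)) := by
          apply mul_le_mul_of_nonneg_left h1 (by positivity)
      _ ≤ _ := h2
  have hsum1 : ‖∑ τ ∈ Finset.range (k+1), (2 * ((τ:ℝ)+2) / K) • (a (τ+1) - gstar)‖
      ≤ 2 * C₁ / K * ((2/3) * (s * ((k:ℝ)+3) + ((k:ℝ)+3))) := by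
    calc ‖∑ τ ∈ Finset.range (k+1), (2 * ((τ:ℝ)+2) / K) • (a (τ+1) - gstar)‖
        ≤ ∑ τ ∈ Finset.range (k+1), ‖(2 * ((τ:ℝ)+2) / K) • (a (τ+1) - gstar)‖ :=
          norm_sum_le _ _
      _ ≤ ∑ τ ∈ Finset.range (k+1), 2 * C₁ / K * Real.sqrt ((τ:ℝ)+3) :=
          Finset.sum_le_sum hterm
      _ = 2 * C₁ / K * ∑ τ ∈ Finset.range (k+1), Real.sqrt ((τ:ℝ)+3) := by
          rw [Finset.mul_sum]
      _ ≤ _ := by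
          apply mul_le_mul_of_nonneg_left (sum_sqrt_bound k) (by positivity)
  have hfinal : 2 * C₁ / K * ((2/3) * (s * ((k:ℝ)+3) + ((k:ℝ)+3)))
      = 4 * C₁ / (3 * (s - 1)) := by
    have hK : K = (s - 1) * (s + 1) * ((k:ℝ)+3) := by
      rw [hKdef]; nlinarith
    have hnum : s*((k:ℝ)+3)+((k:ℝ)+3) = (s+1)*((k:ℝ)+3) := by ring
    rw [hK, hnum]
    have h1 : s - 1 ≠ 0 := by linarith
    have h2 : s + 1 ≠ 0 := by linarith
    have h3 : (k:ℝ)+3 ≠ 0 := by positivity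
    field_simp
    ring
  calc ‖(∑ τ ∈ Finset.range (k+1), (2 * ((τ:ℝ)+2) / K) • (a (τ+1) - gstar))
        + (-(2 / K)) • gstar‖
      ≤ ‖∑ τ ∈ Finset.range (k+1), (2 * ((τ:ℝ)+2) / K) • (a (τ+1) - gstar)‖
        + ‖(-(2 / K)) • gstar‖ := norm_add_le _ _
    _ ≤ 2 * C₁ / K * ((2/3) * (s * ((k:ℝ)+3) + ((k:ℝ)+3))) + 2 * Gstar / K := by
        have : ‖(-(2 / K)) • gstar‖ = 2 / K * Gstar := by
          rw [norm_smul, Real.norm_eq_abs, abs_neg, abs_of_nonneg (by positivity), hG]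
        rw [this]
        have : 2 / K * Gstar = 2 * Gstar / K := by ring
        rw [this]
        linarith [hsum1]
    _ ≤ _ := by rw [hfinal]
end

section
/- Let f be convex differentiable with L-Lipschitz gradient (in a norm ‖·‖ with dual norm ‖·‖_*), let X be convex with diameter D, and let x_k, v_k, v̂_{k+1} ∈ X, δ_k ∈ (0,1). Define y_k = (1−δ_k)x_k + δ_k v_k and x_{k+1} = (1−δ_k)x_k + δ_k v̂_{k+1}. Then f(x_{k+1}) ≤ (1−δ_k) f(x_k) + δ_k f(y_k) + δ_k ⟨∇f(y_k), v̂_{k+1} − y_k⟩ + (Lδ_k²/2)‖v̂_{k+1} − v_k‖². -/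
lemma descent_lemma_s18
    {E : Type*} [NormedAddCommGroup E] [NormedSpace ℝ E]
    (f : E → ℝ) (g : E → E →L[ℝ] ℝ)
    (hderiv : ∀ x, HasFDerivAt f (g x) x)
    (L : ℝ) (hL : 0 < L)
    (X : Set E) (hXconv : Convex ℝ X)
    (hlip : ∀ x ∈ X, ∀ y ∈ X, ‖g x - g y‖ ≤ L * ‖x - y‖)
    (a b : E) (ha : a ∈ X) (hb : b ∈ X) :
    f b ≤ f a + g a (b - a) + L / 2 * ‖b - a‖ ^ 2 := by
  set w := b - a with hw
  have hz : ∀ t ∈ Set.Icc (0:ℝ) 1, a + t • w ∈ X := by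
    intro t ht
    have := hXconv ha hb (by linarith [ht.2] : (0:ℝ) ≤ 1 - t) ht.1 (by ring)
    convert this using 1
    simp [hw]
    module
  have hderivφ : ∀ t : ℝ, HasDerivAt (fun s : ℝ => f (a + s • w)) (g (a + t • w) w) t := by
    intro t
    have h1 : HasDerivAt (fun s : ℝ => a + s • w) w t := by
      simpa using ((hasDerivAt_id t).smul_const w).const_add a
    exact (hderiv (a + t • w)).comp_hasDerivAt t h1
  have hcont : ContinuousOn (fun t : ℝ => (g (a + t • w)) w) (Set.Icc (0:ℝ) 1) := by
    have hlipg : LipschitzOnWith (Real.toNNReal (L * ‖w‖)) (fun t : ℝ => g (a + t • w))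
        (Set.Icc (0:ℝ) 1) := by
      intro s hs t ht
      rw [edist_nndist, edist_nndist]
      rw [← ENNReal.coe_mul, ENNReal.coe_le_coe, ← NNReal.coe_le_coe]
      push_cast
      have h1 : ‖g (a + s • w) - g (a + t • w)‖ ≤ L * ‖(a + s • w) - (a + t • w)‖ :=
        hlip _ (hz s hs) _ (hz t ht)
      have h2 : (a + s • w) - (a + t • w) = (s - t) • w := by module
      rw [h2, norm_smul] at h1
      calc dist (g (a + s • w)) (g (a + t • w)) = ‖g (a + s • w) - g (a + t • w)‖ := by
            rw [dist_eq_norm]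
        _ ≤ L * (‖s - t‖ * ‖w‖) := h1
        _ = max (L * ‖w‖) 0 * dist s t := by
            rw [max_eq_left (by positivity), Real.norm_eq_abs, Real.dist_eq]; ring
    exact (ContinuousLinearMap.apply ℝ ℝ w).continuous.comp_continuousOn
      hlipg.continuousOn
  have hint : IntervalIntegrable (fun t : ℝ => (g (a + t • w)) w) MeasureTheory.volume 0 1 := by
    apply ContinuousOn.intervalIntegrable
    rwa [Set.uIcc_of_le zero_le_one]
  have hftc : ∫ t in (0:ℝ)..1, (g (a + t • w)) w = f b - f a := by
    rw [intervalIntegral.integral_eq_sub_of_hasDerivAt (fun t _ => hderivφ t) hint]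
    simp [hw]
  have hbound : ∫ t in (0:ℝ)..1, (g (a + t • w)) w ≤
      g a w + L / 2 * ‖w‖ ^ 2 := by
    have h1 : ∀ t ∈ Set.Icc (0:ℝ) 1, (g (a + t • w)) w ≤ g a w + L * t * ‖w‖ ^ 2 := by
      intro t ht
      have h2 : (g (a + t • w)) w - g a w = (g (a + t • w) - g a) w := by simp
      have h3 : (g (a + t • w) - g a) w ≤ ‖g (a + t • w) - g a‖ * ‖w‖ :=
        le_trans (le_abs_self _) (by rw [← Real.norm_eq_abs]; exact (g (a + t • w) - g a).le_opNorm w)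
      have h4 : ‖g (a + t • w) - g a‖ ≤ L * ‖(a + t • w) - a‖ :=
        hlip _ (hz t ht) _ ha
      have h5 : ‖(a + t • w) - a‖ = t * ‖w‖ := by
        rw [add_sub_cancel_left, norm_smul, Real.norm_eq_abs, abs_of_nonneg ht.1]
      rw [h5] at h4
      have h7 := mul_le_mul_of_nonneg_right h4 (norm_nonneg w)
      nlinarith [h7]
    have h6 : ∫ t in (0:ℝ)..1, (g a w + L * t * ‖w‖ ^ 2) =
        g a w + L / 2 * ‖w‖ ^ 2 := by
      rw [intervalIntegral.integral_add (intervalIntegrable_const)]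
      · simp only [intervalIntegral.integral_const]
        have : ∫ t in (0:ℝ)..1, L * t * ‖w‖ ^ 2 = (L * ‖w‖^2) * ∫ t in (0:ℝ)..1, t := by
          rw [← intervalIntegral.integral_const_mul]
          congr 1; ext t; ring
        rw [this, integral_id]
        simp
        ring
      · have : (fun t : ℝ => L * t * ‖w‖ ^ 2) = fun t : ℝ => (L * ‖w‖^2) * t := by
          ext t; ring
        rw [this]
        exact ((continuous_const.mul continuous_id).intervalIntegrable 0 1)
    rw [← h6]
    apply intervalIntegral.integral_mono_on zero_le_one hint _ h1
    apply ContinuousOn.intervalIntegrable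
    exact Continuous.continuousOn (by continuity)
  rw [hftc] at hbound
  linarith

/-- Descent inequality for the prediction step of ExtraFW: with
`y_k = (1−δ_k)x_k + δ_k v_k` and `x_{k+1} = (1−δ_k)x_k + δ_k v̂_{k+1}`,
`f(x_{k+1}) ≤ (1−δ_k)f(x_k) + δ_k f(y_k) + δ_k⟨∇f(y_k), v̂_{k+1} − y_k⟩
 + (Lδ_k²/2)‖v̂_{k+1} − v_k‖²`. -/
theorem extrafw_descent_step
    {E : Type*} [NormedAddCommGroup E] [NormedSpace ℝ E]
    (f : E → ℝ) (g : E → E →L[ℝ] ℝ)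
    (hderiv : ∀ x, HasFDerivAt f (g x) x)
    (L : ℝ) (hL : 0 < L)
    (X : Set E) (hXconv : Convex ℝ X)
    (D : ℝ) (hdiam : ∀ x ∈ X, ∀ y ∈ X, ‖x - y‖ ≤ D)
    (hlip : ∀ x ∈ X, ∀ y ∈ X, ‖g x - g y‖ ≤ L * ‖x - y‖)
    (hconv : ∀ x ∈ X, ∀ y ∈ X, f y + g y (x - y) ≤ f x)
    (xk vk vhat : E) (hxk : xk ∈ X) (hvk : vk ∈ X) (hvhat : vhat ∈ X)
    (δ : ℝ) (hδ : δ ∈ Set.Ioo (0:ℝ) 1)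
    (yk xk1 : E)
    (hyk : yk = (1 - δ) • xk + δ • vk)
    (hxk1 : xk1 = (1 - δ) • xk + δ • vhat) :
    f xk1 ≤ (1 - δ) * f xk + δ * f yk + δ * g yk (vhat - yk) +
      L * δ^2 / 2 * ‖vhat - vk‖^2 := by
  obtain ⟨hδ0, hδ1⟩ := hδ
  have hykX : yk ∈ X := by
    rw [hyk]; exact hXconv hxk hvk (by linarith) hδ0.le (by ring)
  have hxk1X : xk1 ∈ X := by
    rw [hxk1]; exact hXconv hxk hvhat (by linarith) hδ0.le (by ring)
  have hdesc := descent_lemma_s18 f g hderiv L hL X hXconv hlip yk xk1 hykX hxk1X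
  have hdiff : xk1 - yk = δ • (vhat - vk) := by rw [hxk1, hyk]; module
  have hnorm : ‖xk1 - yk‖ ^ 2 = δ ^ 2 * ‖vhat - vk‖ ^ 2 := by
    rw [hdiff, norm_smul, Real.norm_eq_abs, abs_of_pos hδ0, mul_pow]
  have hsplit : xk1 - yk = (1 - δ) • (xk - yk) + δ • (vhat - yk) := by
    rw [hxk1, hyk]; module
  have hlin : g yk (xk1 - yk) = (1 - δ) * g yk (xk - yk) + δ * g yk (vhat - yk) := by
    rw [hsplit]; simp
  have hcv : f yk + g yk (xk - yk) ≤ f xk := hconv xk hxk yk hykX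
  rw [hnorm, hlin] at hdesc
  nlinarith [hdesc, hcv]
end
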